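/- Let G be a graph and v a vertex of G. Then |M_G| ≥ |M_{G-v}|, where M_G denotes the set of maximal induced matchings. -/
import Mathlib


open SimpleGraph

/-- An induced matching: a set of edges of `G` such that the endpoints of distinct
edges are distinct and non-adjacent (i.e. the endpoints induce a 1-regular subgraph). -/
def IsInducedMatching {V : Type*} (G : SimpleGraph V) (M : Set (Sym2 V)) : Prop :=
  M ⊆ G.edgeSet ∧
    ∀ e ∈ M, ∀ f ∈ M, e ≠ f → ∀ a ∈ e, ∀ b ∈ f, a ≠ b ∧ ¬ G.Adj a b

/-- A maximal induced matching: an induced matching not properly contained in another. -/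
def IsMaximalInducedMatching {V : Type*} (G : SimpleGraph V) (M : Set (Sym2 V)) : Prop :=
  IsInducedMatching G M ∧ ∀ M' : Set (Sym2 V), IsInducedMatching G M' → M ⊆ M' → M' = M

/-- The number of maximal induced matchings of `G`. -/
noncomputable def mim {V : Type*} (G : SimpleGraph V) : ℕ :=
  {M : Set (Sym2 V) | IsMaximalInducedMatching G M}.ncard

section Aux

variable {V : Type*} {G : SimpleGraph V} {v : V}

private lemma im_mono {N N' : Set (Sym2 V)} (h : IsInducedMatching G N) (hs : N' ⊆ N) :
    IsInducedMatching G N' :=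
  ⟨hs.trans h.1, fun e he f hf => h.2 e (hs he) f (hs hf)⟩

private lemma liftInj : Function.Injective
    (Sym2.map (Subtype.val : {u : V | u ≠ v} → V)) :=
  Sym2.map.injective Subtype.val_injective

private lemma lift_not_mem {M : Set (Sym2 {u : V | u ≠ v})} {e : Sym2 V}
    (he : e ∈ Sym2.map Subtype.val '' M) : v ∉ e := by
  obtain ⟨e', _, rfl⟩ := he
  intro hv
  rw [Sym2.mem_map] at hv
  obtain ⟨a, _, ha⟩ := hv
  exact a.2 ha

private lemma im_lift {M : Set (Sym2 {u : V | u ≠ v})}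
    (h : IsInducedMatching (G.induce {u | u ≠ v}) M) :
    IsInducedMatching G (Sym2.map Subtype.val '' M) := by
  constructor
  · rintro e ⟨e', he', rfl⟩
    have hmem := h.1 he'
    induction e' using Sym2.ind with
    | _ a b =>
      rw [Sym2.map_pair_eq, SimpleGraph.mem_edgeSet]
      rw [SimpleGraph.mem_edgeSet] at hmem
      exact hmem
  · rintro e ⟨e', he', rfl⟩ f ⟨f', hf', rfl⟩ hne a ha b hb
    have hne' : e' ≠ f' := fun hh => hne (by rw [hh])
    rw [Sym2.mem_map] at ha hb
    obtain ⟨a', ha', rfl⟩ := ha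
    obtain ⟨b', hb', rfl⟩ := hb
    have hp := h.2 e' he' f' hf' hne' a' ha' b' hb'
    exact ⟨fun hab => hp.1 (Subtype.val_injective hab), hp.2⟩

private lemma im_unlift {N : Set (Sym2 V)} (h : IsInducedMatching G N)
    (hv : ∀ e ∈ N, v ∉ e) :
    ∃ M, IsInducedMatching (G.induce {u | u ≠ v}) M ∧ Sym2.map Subtype.val '' M = N := by
  refine ⟨{e' | Sym2.map Subtype.val e' ∈ N}, ⟨?_, ?_⟩, ?_⟩
  · intro e' he'
    revert he'
    induction e' using Sym2.ind with
    | _ a b =>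
      intro he'
      rw [Set.mem_setOf_eq, Sym2.map_pair_eq] at he'
      have := h.1 he'
      rw [SimpleGraph.mem_edgeSet] at this
      rw [SimpleGraph.mem_edgeSet]
      exact this
  · intro e' he' f' hf' hne a' ha' b' hb'
    have hne2 : Sym2.map Subtype.val e' ≠ Sym2.map Subtype.val f' :=
      fun hh => hne (liftInj hh)
    have hp := h.2 _ he' _ hf' hne2 a'.val (Sym2.mem_map.2 ⟨a', ha', rfl⟩)
      b'.val (Sym2.mem_map.2 ⟨b', hb', rfl⟩)
    exact ⟨fun hab => hp.1 (congrArg Subtype.val hab), hp.2⟩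
  · apply Set.Subset.antisymm
    · rintro e ⟨e', he', rfl⟩; exact he'
    · intro e he
      revert he
      induction e using Sym2.ind with
      | _ a b =>
        intro he
        have ha : a ≠ v := fun hh => hv _ he (hh ▸ Sym2.mem_mk_left a b)
        have hb : b ≠ v := fun hh => hv _ he (hh ▸ Sym2.mem_mk_right a b)
        exact ⟨s(⟨a, ha⟩, ⟨b, hb⟩), by rwa [Set.mem_setOf_eq, Sym2.map_pair_eq],
          by rw [Sym2.map_pair_eq]⟩

private lemma max_transfer {M : Set (Sym2 {u : V | u ≠ v})}
    (hM : IsMaximalInducedMatching (G.induce {u | u ≠ v}) M)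
    {N' : Set (Sym2 V)} (h1 : IsInducedMatching G N')
    (h2 : Sym2.map Subtype.val '' M ⊆ N') (h3 : ∀ e ∈ N', v ∉ e) :
    N' = Sym2.map Subtype.val '' M := by
  obtain ⟨M', hM', hM'N⟩ := im_unlift h1 h3
  have hsub : M ⊆ M' := by
    rw [← Set.image_subset_image_iff liftInj, hM'N]
    exact h2
  rw [← hM'N, hM.2 M' hM' hsub]

private lemma main_ext {M : Set (Sym2 {u : V | u ≠ v})}
    (hM : IsMaximalInducedMatching (G.induce {u | u ≠ v}) M) :
    ∃ N, IsMaximalInducedMatching G N ∧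
      {f ∈ N | v ∉ f} = Sym2.map Subtype.val '' M := by
  by_cases hmax : IsMaximalInducedMatching G (Sym2.map Subtype.val '' M)
  · exact ⟨_, hmax, Set.Subset.antisymm (fun f hf => hf.1)
      (fun f hf => ⟨hf, lift_not_mem hf⟩)⟩
  · have him := im_lift hM.1
    have hB : ¬ ∀ N', IsInducedMatching G N' → Sym2.map Subtype.val '' M ⊆ N' →
        N' = Sym2.map Subtype.val '' M := fun hb => hmax ⟨him, hb⟩
    push_neg at hB
    obtain ⟨N', hN', hsubN', hneN'⟩ := hB
    obtain ⟨e, heN', heM⟩ := Set.exists_of_ssubset (hsubN'.ssubset_of_ne (Ne.symm hneN'))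
    have hNe : IsInducedMatching G (Sym2.map Subtype.val '' M ∪ {e}) :=
      im_mono hN' (Set.union_subset hsubN' (Set.singleton_subset_iff.2 heN'))
    have hev : v ∈ e := by
      by_contra hev
      have hall : ∀ f ∈ Sym2.map Subtype.val '' M ∪ {e}, v ∉ f := by
        rintro f (hf | hf)
        · exact lift_not_mem hf
        · rw [Set.mem_singleton_iff] at hf; subst hf; exact hev
      have := max_transfer hM hNe Set.subset_union_left hall
      exact heM (this ▸ Set.mem_union_right _ rfl)
    refine ⟨Sym2.map Subtype.val '' M ∪ {e}, ⟨hNe, ?_⟩, ?_⟩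
    · intro N'' hN'' hsub''
      have heN'' : e ∈ N'' := hsub'' (Set.mem_union_right _ rfl)
      have hvf : ∀ f ∈ N'', f ≠ e → v ∉ f := by
        intro f hf hfe hvf
        exact (hN''.2 e heN'' f hf (Ne.symm hfe) v hev v hvf).1 rfl
      have hNv : {f ∈ N'' | v ∉ f} = Sym2.map Subtype.val '' M := by
        apply max_transfer hM (im_mono hN'' (fun f hf => hf.1))
        · intro f hf
          exact ⟨hsub'' (Set.mem_union_left _ hf), lift_not_mem hf⟩
        · exact fun f hf => hf.2
      apply Set.Subset.antisymm _ hsub''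
      intro f hf
      by_cases hfe : f = e
      · exact Set.mem_union_right _ (hfe ▸ rfl)
      · exact Set.mem_union_left _ (hNv ▸ (⟨hf, hvf f hf hfe⟩ : f ∈ {f ∈ N'' | v ∉ f}))
    · apply Set.Subset.antisymm
      · rintro f ⟨(hf | hf), hfv⟩
        · exact hf
        · rw [Set.mem_singleton_iff] at hf; subst hf; exact absurd hev hfv
      · intro f hf
        exact ⟨Set.mem_union_left _ hf, lift_not_mem hf⟩

end Aux

theorem mim_deleteVertex_le {V : Type*} [Fintype V] (G : SimpleGraph V) (v : V) :
    mim (G.induce {u | u ≠ v}) ≤ mim G := by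
  classical
  unfold mim
  apply Set.ncard_le_ncard_of_injOn
    (fun M => if h : IsMaximalInducedMatching (G.induce {u | u ≠ v}) M then
      (main_ext h).choose else ∅)
  · intro M hM
    simp only [Set.mem_setOf_eq] at hM ⊢
    rw [dif_pos hM]
    exact (main_ext hM).choose_spec.1
  · intro M1 h1 M2 h2 heq
    simp only [Set.mem_setOf_eq] at h1 h2
    simp only [dif_pos h1, dif_pos h2] at heq
    have e1 := (main_ext h1).choose_spec.2
    have e2 := (main_ext h2).choose_spec.2
    rw [heq] at e1
    rw [e2] at e1
    exact Set.image_injective.2 liftInj e1.symm
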